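/- Let G be a finite non-abelian group that is 4-centralizer, i.e., the set {C_G(x) : x ∈ G} of centralizers of elements of G has exactly 4 members. Then the characteristic polynomial of the adjacency matrix of the commuting graph Γ_G (over the reals) equals (X + 1)^(3·(|Z(G)| − 1)) · (X − (|Z(G)| − 1))^3; in particular G is commuting integral. -/

import Mathlib

open Polynomial

/-- The commuting graph of a group `G`: vertices are the non-central elements,
two distinct vertices are adjacent iff they commute. -/
def commutingGraph (G : Type*) [Group G] : SimpleGraph {x : G // x ∉ Subgroup.center G} where
  Adj x y := x ≠ y ∧ (x : G) * y = (y : G) * x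
  symm := ⟨by rintro x y ⟨hne, hc⟩; exact ⟨hne.symm, hc.symm⟩⟩
  loopless := ⟨by rintro x ⟨hne, _⟩; exact hne rfl⟩

open scoped Classical in
/-- The characteristic polynomial (over `ℝ`) of the adjacency matrix of the
commuting graph of `G`. -/
noncomputable def commCharpoly (G : Type*) [Group G] [Fintype G] : Polynomial ℝ :=
  ((commutingGraph G).adjMatrix ℝ).charpoly


section Aux
open Matrix Subgroup

section GroupAux
variable {G : Type*} [Group G]

lemma exists_not_mem_pair {A B : Subgroup G} (hA : A ≠ ⊤) (hB : B ≠ ⊤) :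
    ∃ g : G, g ∉ A ∧ g ∉ B := by
  obtain ⟨u, hu⟩ : ∃ u, u ∉ A := by
    by_contra h; push_neg at h; exact hA (Subgroup.eq_top_iff' A |>.2 h)
  obtain ⟨v, hv⟩ : ∃ v, v ∉ B := by
    by_contra h; push_neg at h; exact hB (Subgroup.eq_top_iff' B |>.2 h)
  by_cases huB : u ∈ B
  · by_cases hvA : v ∈ A
    · refine ⟨u * v, fun h => hu ?_, fun h => hv ?_⟩
      · simpa using mul_mem h (inv_mem hvA)
      · simpa using mul_mem (inv_mem huB) h
    · exact ⟨v, hvA, hv⟩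
  · exact ⟨u, hu, huB⟩

/-- coset lemma : noncentral elements of A' lie in a single coset of the center -/
lemma same_coset {A' B' C' : Subgroup G}
    (hcov : ∀ g : G, g ∈ A' ∨ g ∈ B' ∨ g ∈ C')
    (hAB : ∀ x : G, x ∈ A' → x ∈ B' → x ∈ center G)
    (hAC : ∀ x : G, x ∈ A' → x ∈ C' → x ∈ center G)
    (hβ : ∃ β : G, β ∈ B' ∧ β ∉ center G)
    {x y : G} (hxA : x ∈ A') (hx : x ∉ center G) (hyA : y ∈ A') (hy : y ∉ center G) :
    x⁻¹ * y ∈ center G := by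
  obtain ⟨β, hβB, hβZ⟩ := hβ
  have place : ∀ w : G, w ∈ A' → w ∉ center G → w * β ∈ C' := by
    intro w hwA hw
    rcases hcov (w * β) with h | h | h
    · exact absurd (hAB β (by simpa using mul_mem (inv_mem hwA) h) hβB) hβZ
    · exact absurd (hAB w hwA (by simpa using mul_mem h (inv_mem hβB))) hw
    · exact h
  have hxy : x * y⁻¹ ∈ C' := by
    have := mul_mem (place x hxA hx) (inv_mem (place y hyA hy))
    simpa [mul_assoc] using this
  have hxyZ : x * y⁻¹ ∈ center G := hAC _ (mul_mem hxA (inv_mem hyA)) hxy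
  -- convert to x⁻¹ * y ∈ center
  have hw : (x * y⁻¹)⁻¹ ∈ center G := inv_mem hxyZ
  have key : x⁻¹ * y = y⁻¹ * ((x * y⁻¹)⁻¹ * y) := by group
  rw [key, ← Subgroup.mem_center_iff.1 hw y, inv_mul_cancel_left]
  exact hw


variable [Finite G]


lemma four_centralizer_structure (hna : ∃ a b : G, a * b ≠ b * a)
    (h4 : Nat.card (Set.range fun x : G => Subgroup.centralizer ({x} : Set G)) = 4) :
    (∀ x y : G, x ∉ center G → y ∉ center G → (x * y = y * x ↔ x⁻¹ * y ∈ center G)) ∧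
      Nat.card (G ⧸ center G) = 4 := by
  classical
  set R : Set (Subgroup G) := Set.range fun x : G => Subgroup.centralizer ({x} : Set G) with hR
  have hR4 : R.ncard = 4 := by rw [← Nat.card_coe_set_eq]; exact h4
  have htop : (⊤ : Subgroup G) ∈ R := by
    refine ⟨1, ?_⟩
    ext g; simp [Subgroup.mem_centralizer_singleton_iff]
  have hcent_top : ∀ x : G, x ∈ center G → Subgroup.centralizer ({x} : Set G) = ⊤ := by
    intro x hx
    ext g
    simp [Subgroup.mem_centralizer_singleton_iff, (Subgroup.mem_center_iff.1 hx g).symm]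
  have hproper : ∀ x : G, x ∉ center G → Subgroup.centralizer ({x} : Set G) ≠ ⊤ := by
    intro x hx h
    refine hx (Subgroup.mem_center_iff.2 fun g => ?_)
    have hg : g ∈ Subgroup.centralizer ({x} : Set G) := h ▸ Subgroup.mem_top g
    exact Subgroup.mem_centralizer_singleton_iff.1 hg
  have hRR : R = Set.range fun x : G => Subgroup.centralizer ({x} : Set G) := hR
  have hP3 : (R \ {⊤}).ncard = 3 := by
    rw [Set.ncard_diff_singleton_of_mem htop]; omega
  obtain ⟨A, B, C, hab, hac, hbc, hP⟩ := Set.ncard_eq_three.1 hP3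
  -- membership of each noncentral centralizer
  have hmem : ∀ x : G, x ∉ center G →
      Subgroup.centralizer ({x} : Set G) = A ∨ Subgroup.centralizer ({x} : Set G) = B ∨
        Subgroup.centralizer ({x} : Set G) = C := by
    intro x hx
    have : Subgroup.centralizer ({x} : Set G) ∈ R \ {⊤} :=
      ⟨hR ▸ Set.mem_range_self x, hproper x hx⟩
    rw [hP] at this
    simpa using this
  -- noncentral generator in each
  have hgen : ∀ S : Subgroup G, S ∈ R \ {⊤} → ∃ s : G, s ∉ center G ∧ s ∈ S ∧
      Subgroup.centralizer ({s} : Set G) = S := by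
    rintro S ⟨hSR, hSt⟩
    rw [hR] at hSR
    obtain ⟨s, hs⟩ := hSR
    have hsZ : s ∉ center G := by
      intro h; exact hSt (by simp [← hs, hcent_top s h])
    exact ⟨s, hsZ, hs ▸ Subgroup.mem_centralizer_singleton_iff.2 rfl, hs⟩
  have hAP : A ∈ R \ {⊤} := by rw [hP]; simp
  have hBP : B ∈ R \ {⊤} := by rw [hP]; simp
  have hCP : C ∈ R \ {⊤} := by rw [hP]; simp
  obtain ⟨a, haZ, haA, haC⟩ := hgen A hAP
  obtain ⟨b, hbZ, hbB, hbC⟩ := hgen B hBP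
  obtain ⟨c, hcZ, hcC, hcC'⟩ := hgen C hCP
  -- cover
  have hcov : ∀ g : G, g ∈ A ∨ g ∈ B ∨ g ∈ C := by
    intro g
    by_cases hg : g ∈ center G
    · exact Or.inl (haC ▸ Subgroup.center_le_centralizer _ hg)
    · rcases hmem g hg with h | h | h
      · exact Or.inl (h ▸ Subgroup.mem_centralizer_singleton_iff.2 rfl)
      · exact Or.inr (Or.inl (h ▸ Subgroup.mem_centralizer_singleton_iff.2 rfl))
      · exact Or.inr (Or.inr (h ▸ Subgroup.mem_centralizer_singleton_iff.2 rfl))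
  -- triple intersection is the center
  have htriple : ∀ x : G, x ∈ A → x ∈ B → x ∈ C → x ∈ center G := by
    intro x hxA hxB hxC
    refine Subgroup.mem_center_iff.2 fun g => ?_
    by_cases hg : g ∈ center G
    · exact (Subgroup.mem_center_iff.1 hg x).symm
    · rcases hmem g hg with h | h | h
      · have hx : x ∈ Subgroup.centralizer ({g} : Set G) := by rw [h]; exact hxA
        exact (Subgroup.mem_centralizer_singleton_iff.1 hx).symm
      · have hx : x ∈ Subgroup.centralizer ({g} : Set G) := by rw [h]; exact hxB
        exact (Subgroup.mem_centralizer_singleton_iff.1 hx).symm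
      · have hx : x ∈ Subgroup.centralizer ({g} : Set G) := by rw [h]; exact hxC
        exact (Subgroup.mem_centralizer_singleton_iff.1 hx).symm
  have hAt : A ≠ ⊤ := fun h => hAP.2 (by simp [h])
  have hBt : B ≠ ⊤ := fun h => hBP.2 (by simp [h])
  have hCt : C ≠ ⊤ := fun h => hCP.2 (by simp [h])
  have pairZ : ∀ A' B' C' : Subgroup G, (∀ g : G, g ∈ A' ∨ g ∈ B' ∨ g ∈ C') →
      A' ≠ ⊤ → B' ≠ ⊤ → (∀ x : G, x ∈ A' → x ∈ B' → x ∈ C' → x ∈ center G) →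
      ∀ x : G, x ∈ A' → x ∈ B' → x ∈ center G := by
    intro A' B' C' hcov' hA' hB' htrip x hxA hxB
    obtain ⟨g, hgA, hgB⟩ := exists_not_mem_pair hA' hB'
    have hgC : g ∈ C' := by rcases hcov' g with h|h|h <;> tauto
    have hgx : g * x ∈ C' := by
      rcases hcov' (g * x) with h|h|h
      · exact absurd (by simpa using mul_mem h (inv_mem hxA)) hgA
      · exact absurd (by simpa using mul_mem h (inv_mem hxB)) hgB
      · exact h
    have hxC : x ∈ C' := by simpa using mul_mem (inv_mem hgC) hgx
    exact htrip x hxA hxB hxC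
  have hABZ : ∀ x : G, x ∈ A → x ∈ B → x ∈ center G :=
    pairZ A B C hcov hAt hBt htriple
  have hACZ : ∀ x : G, x ∈ A → x ∈ C → x ∈ center G :=
    pairZ A C B (fun g => by rcases hcov g with h|h|h <;> tauto) hAt hCt
      (fun x h1 h2 h3 => htriple x h1 h3 h2)
  have hBCZ : ∀ x : G, x ∈ B → x ∈ C → x ∈ center G :=
    pairZ B C A (fun g => by rcases hcov g with h|h|h <;> tauto) hBt hCt
      (fun x h1 h2 h3 => htriple x h3 h1 h2)
  have hcovB : ∀ g : G, g ∈ B ∨ g ∈ A ∨ g ∈ C := fun g => by rcases hcov g with h|h|h <;> tauto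
  have hcovC : ∀ g : G, g ∈ C ∨ g ∈ A ∨ g ∈ B := fun g => by rcases hcov g with h|h|h <;> tauto
  have scA := fun {x y : G} => same_coset hcov hABZ hACZ ⟨b, hbB, hbZ⟩ (x := x) (y := y)
  have scB := fun {x y : G} => same_coset hcovB (fun x h1 h2 => hABZ x h2 h1) hBCZ
    ⟨a, haA, haZ⟩ (x := x) (y := y)
  have scC := fun {x y : G} => same_coset hcovC (fun x h1 h2 => hACZ x h2 h1)
    (fun x h1 h2 => hBCZ x h2 h1) ⟨a, haA, haZ⟩ (x := x) (y := y)
  have K1 : ∀ x y : G, x ∉ center G → y ∉ center G → (x * y = y * x ↔ x⁻¹ * y ∈ center G) := by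
    intro x y hx hy
    constructor
    · intro hcomm
      have hyx : y ∈ Subgroup.centralizer ({x} : Set G) :=
        Subgroup.mem_centralizer_singleton_iff.2 hcomm.symm
      have hxx : x ∈ Subgroup.centralizer ({x} : Set G) :=
        Subgroup.mem_centralizer_singleton_iff.2 rfl
      rcases hmem x hx with h|h|h
      · exact scA (h ▸ hxx) hx (h ▸ hyx) hy
      · exact scB (h ▸ hxx) hx (h ▸ hyx) hy
      · exact scC (h ▸ hxx) hx (h ▸ hyx) hy
    · intro hz
      have h2 : x * (x⁻¹ * y) = x⁻¹ * y * x := Subgroup.mem_center_iff.1 hz x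
      rw [mul_inv_cancel_left] at h2
      calc x * y = x * (x⁻¹ * y * x) := by rw [← h2]
        _ = y * x := by group
  refine ⟨K1, ?_⟩
  have hZA : center G ≤ A := le_trans (Subgroup.center_le_centralizer _) (le_of_eq haC)
  have hZB : center G ≤ B := le_trans (Subgroup.center_le_centralizer _) (le_of_eq hbC)
  have hZC : center G ≤ C := le_trans (Subgroup.center_le_centralizer _) (le_of_eq hcC')
  have hne_ab : (QuotientGroup.mk a : G ⧸ center G) ≠ QuotientGroup.mk b := by
    intro h
    have hz := QuotientGroup.eq.1 h
    have : b ∈ A := by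
      have := mul_mem haA (hZA hz)
      simpa using this
    exact hbZ (hABZ b this hbB)
  have hne_ac : (QuotientGroup.mk a : G ⧸ center G) ≠ QuotientGroup.mk c := by
    intro h
    have hz := QuotientGroup.eq.1 h
    have : c ∈ A := by
      have := mul_mem haA (hZA hz)
      simpa using this
    exact hcZ (hACZ c this hcC)
  have hne_bc : (QuotientGroup.mk b : G ⧸ center G) ≠ QuotientGroup.mk c := by
    intro h
    have hz := QuotientGroup.eq.1 h
    have : c ∈ B := by
      have := mul_mem hbB (hZB hz)
      simpa using this
    exact hcZ (hBCZ c this hcC)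
  have hne1a : (1 : G ⧸ center G) ≠ QuotientGroup.mk a := by
    intro h
    exact haZ ((QuotientGroup.eq_one_iff a).1 h.symm)
  have hne1b : (1 : G ⧸ center G) ≠ QuotientGroup.mk b := by
    intro h
    exact hbZ ((QuotientGroup.eq_one_iff b).1 h.symm)
  have hne1c : (1 : G ⧸ center G) ≠ QuotientGroup.mk c := by
    intro h
    exact hcZ ((QuotientGroup.eq_one_iff c).1 h.symm)
  have huniv : (Set.univ : Set (G ⧸ center G)) = {(1 : G ⧸ center G),
      QuotientGroup.mk a, QuotientGroup.mk b, QuotientGroup.mk c} := by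
    ext q
    simp only [Set.mem_univ, true_iff, Set.mem_insert_iff, Set.mem_singleton_iff]
    obtain ⟨g, rfl⟩ := QuotientGroup.mk_surjective q
    by_cases hg : g ∈ center G
    · exact Or.inl ((QuotientGroup.eq_one_iff g).2 hg)
    · have hgx : g ∈ Subgroup.centralizer ({g} : Set G) :=
        Subgroup.mem_centralizer_singleton_iff.2 rfl
      rcases hmem g hg with h|h|h
      · exact Or.inr (Or.inl (QuotientGroup.eq.2 (scA (h ▸ hgx) hg haA haZ)))
      · exact Or.inr (Or.inr (Or.inl (QuotientGroup.eq.2 (scB (h ▸ hgx) hg hbB hbZ))))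
      · exact Or.inr (Or.inr (Or.inr (QuotientGroup.eq.2 (scC (h ▸ hgx) hg hcC hcZ))))
  rw [← Set.ncard_univ, huniv]
  rw [Set.ncard_insert_of_notMem (by simp [hne1a, hne1b, hne1c]),
    Set.ncard_insert_of_notMem (by simp [hne_ab, hne_ac]),
    Set.ncard_insert_of_notMem (by simp [hne_bc]), Set.ncard_singleton]

end GroupAux



lemma charpoly_blockDiagonal {R : Type*} [CommRing R] {m o : Type*} [Fintype m] [DecidableEq m]
    [Fintype o] [DecidableEq o] (M : o → Matrix m m R) :
    (Matrix.blockDiagonal M).charpoly = ∏ i : o, (M i).charpoly := by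
  unfold Matrix.charpoly
  rw [← Matrix.det_blockDiagonal]
  congr 1
  ext ⟨i, q⟩ ⟨j, r⟩
  by_cases h : q = r
  · subst h
    by_cases hij : i = j <;>
      simp [Matrix.charmatrix_apply, Matrix.blockDiagonal_apply, Matrix.diagonal_apply, hij,
        Prod.ext_iff]
  · simp [Matrix.charmatrix_apply, Matrix.blockDiagonal_apply, Matrix.diagonal_apply, h,
      Prod.ext_iff]

set_option maxHeartbeats 1000000 in
set_option synthInstance.maxHeartbeats 1000000 in
lemma charpoly_completeMatrix (n : Type*) [Fintype n] [DecidableEq n]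
    (hn : 0 < Fintype.card n) :
    (Matrix.of (fun i j : n => if i = j then (0:ℝ) else 1)).charpoly
      = (X + 1) ^ (Fintype.card n - 1) * (X - C ((Fintype.card n : ℝ) - 1)) := by
  obtain ⟨k, hk⟩ : ∃ k, Fintype.card n = k + 1 := ⟨Fintype.card n - 1, by omega⟩
  have hinj : Function.Injective (algebraMap (Polynomial ℝ) (RatFunc ℝ)) :=
    IsFractionRing.injective _ _
  apply hinj
  set φ := algebraMap (Polynomial ℝ) (RatFunc ℝ)
  set t : RatFunc ℝ := φ (X + 1) with ht
  have htne : t ≠ 0 := by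
    simp only [ht]
    intro h
    have h2 : (X + C 1 : Polynomial ℝ) = 0 := by
      have := hinj (show φ (X + 1) = φ 0 by simpa using h)
      simpa using this
    exact X_add_C_ne_zero 1 h2
  rw [Matrix.charpoly, RingHom.map_det, RingHom.mapMatrix_apply]
  have hmat : (Matrix.charmatrix (Matrix.of (fun i j : n => if i = j then (0:ℝ) else 1))).map φ
      = t • (1 + Matrix.replicateCol Unit (fun _ => -t⁻¹) * Matrix.replicateRow Unit (fun _ => (1:RatFunc ℝ))) := by
    ext i j
    have hcr : ((Matrix.replicateCol Unit fun _ => -t⁻¹) * Matrix.replicateRow Unit fun _ => (1:RatFunc ℝ)) i j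
        = -t⁻¹ := by
      simp [Matrix.mul_apply]
    rcases eq_or_ne i j with hij | hij
    · subst hij
      have hL : ((Matrix.charmatrix (Matrix.of fun i j : n => if i = j then (0:ℝ) else 1)).map
          ⇑φ) i i = φ X := by
        simp [Matrix.charmatrix_apply]
      have hR : ((t • (1 + (Matrix.replicateCol Unit fun _ => -t⁻¹) *
          Matrix.replicateRow Unit fun _ => (1:RatFunc ℝ)) : Matrix n n (RatFunc ℝ))) i i = t - 1 := by
        rw [Matrix.smul_apply, Matrix.add_apply, Matrix.one_apply_eq, hcr, smul_eq_mul,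
          mul_add, mul_one, mul_neg, mul_inv_cancel₀ htne]
        ring
      rw [hL, hR, ht]
      simp only [map_add, _root_.map_one]
      ring
    · have hL : ((Matrix.charmatrix (Matrix.of fun i j : n => if i = j then (0:ℝ) else 1)).map
          ⇑φ) i j = -1 := by
        simp [Matrix.charmatrix_apply, Matrix.diagonal_apply_ne _ hij, hij]
      have hR : ((t • (1 + (Matrix.replicateCol Unit fun _ => -t⁻¹) *
          Matrix.replicateRow Unit fun _ => (1:RatFunc ℝ)) : Matrix n n (RatFunc ℝ))) i j = -1 := by
        rw [Matrix.smul_apply, Matrix.add_apply, Matrix.one_apply_ne hij, hcr, smul_eq_mul,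
          zero_add, mul_neg, mul_inv_cancel₀ htne]
      rw [hL, hR]
  rw [hmat, Matrix.det_smul, Matrix.det_one_add_replicateCol_mul_replicateRow]
  have hdot : (fun _ : n => (1:RatFunc ℝ)) ⬝ᵥ (fun _ : n => -t⁻¹) = -((k+1 : ℕ) * t⁻¹) := by
    simp [dotProduct, Finset.sum_const, ← hk, nsmul_eq_mul]
  rw [hdot]
  have hrhs : ((X + 1) ^ (Fintype.card n - 1) * (X - C ((Fintype.card n : ℝ) - 1)))
      = (X + 1) ^ k * ((X + 1) - ((k+1 : ℕ) : Polynomial ℝ)) := by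
    rw [hk]
    have hc : ((k+1 : ℕ) : ℝ) - 1 = (k:ℝ) := by push_cast; ring
    rw [hc, Polynomial.C_eq_natCast]
    push_cast
    ring
  rw [hrhs]
  simp only [_root_.map_mul, map_pow, map_sub, map_natCast, ← ht]
  rw [hk]
  field_simp
  ring

noncomputable def centerEquiv (G : Type*) [Group G] :
    {x : G // x ∉ Subgroup.center G} ≃
      (Subgroup.center G) × {q : G ⧸ Subgroup.center G // q ≠ 1} where
  toFun x :=
    (⟨(Quotient.out (QuotientGroup.mk (x : G) : G ⧸ Subgroup.center G))⁻¹ * x,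
        QuotientGroup.eq.1 (Quotient.out_eq' (QuotientGroup.mk (x : G)))⟩,
     ⟨QuotientGroup.mk (x : G), fun h => x.2 ((QuotientGroup.eq_one_iff _).1 h)⟩)
  invFun p :=
    ⟨Quotient.out ((p.2 : G ⧸ Subgroup.center G)) * (p.1 : G), by
      intro h
      refine p.2.2 ?_
      have h1 : Quotient.out ((p.2 : G ⧸ Subgroup.center G)) ∈ Subgroup.center G := by
        have := mul_mem h (inv_mem (p.1).2)
        simpa using this
      calc (p.2 : G ⧸ Subgroup.center G)
          = QuotientGroup.mk (Quotient.out ((p.2 : G ⧸ Subgroup.center G))) :=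
            (Quotient.out_eq' _).symm
        _ = 1 := (QuotientGroup.eq_one_iff _).2 h1⟩
  left_inv x := by
    ext
    simp
  right_inv p := by
    have hmk : (QuotientGroup.mk (Quotient.out ((p.2 : G ⧸ Subgroup.center G)) * (p.1 : G))
        : G ⧸ Subgroup.center G) = (p.2 : G ⧸ Subgroup.center G) := by
      have h1 : (QuotientGroup.mk ((p.1 : G)) : G ⧸ Subgroup.center G) = 1 :=
        (QuotientGroup.eq_one_iff _).2 (p.1).2
      rw [QuotientGroup.mk_mul, h1, mul_one]; exact Quotient.out_eq' _
    ext
    · simp only [hmk]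
      simp
    · simp only [hmk]


end Aux

open Matrix Subgroup in
theorem commuting_integral_of_four_centralizer
    (G : Type*) [Group G] [Fintype G]
    (hna : ∃ a b : G, a * b ≠ b * a)
    (h4 : Nat.card (Set.range fun x : G => Subgroup.centralizer ({x} : Set G)) = 4) :
    commCharpoly G =
        (X + 1) ^ (3 * (Nat.card (Subgroup.center G) - 1)) *
          (X - C ((Nat.card (Subgroup.center G) : ℝ) - 1)) ^ 3 ∧
      ∀ μ : ℝ, (commCharpoly G).IsRoot μ → ∃ k : ℤ, μ = (k : ℝ) := by
  classical
  obtain ⟨K1, K2⟩ := four_centralizer_structure hna h4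
  set Z := Subgroup.center G with hZ
  set m := Nat.card Z with hm
  have hm1 : 1 ≤ m := Nat.one_le_iff_ne_zero.2 (Nat.card_ne_zero.2 ⟨⟨1⟩, inferInstance⟩)
  set Q' := {q : G ⧸ Z // q ≠ 1} with hQ'
  have hQ3 : Fintype.card Q' = 3 := by
    have h1 : Fintype.card {q : G ⧸ Z // q = 1} = 1 := Fintype.card_subtype_eq (1 : G ⧸ Z)
    have h2 : Fintype.card (G ⧸ Z) = 4 := by rw [← Nat.card_eq_fintype_card]; exact K2
    have := Fintype.card_subtype_compl (fun q : G ⧸ Z => q = 1)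
    rw [h1, h2] at this
    exact this
  set e := centerEquiv G with he
  set Kmat : Matrix Z Z ℝ := Matrix.of (fun i j : Z => if i = j then (0:ℝ) else 1) with hK
  have hadj : (commutingGraph G).adjMatrix ℝ
      = (Matrix.blockDiagonal (fun _ : Q' => Kmat)).submatrix e e := by
    ext x y
    have hiff : (commutingGraph G).Adj x y ↔
        ((e x).2 = (e y).2 ∧ (e x).1 ≠ (e y).1) := by
      constructor
      · rintro ⟨hne, hc⟩
        have hq : QuotientGroup.mk (x : G) = (QuotientGroup.mk (y : G) : G ⧸ Z) :=
          QuotientGroup.eq.2 ((K1 x y x.2 y.2).1 hc)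
        have h2 : (e x).2 = (e y).2 := Subtype.ext hq
        refine ⟨h2, fun hz => hne ?_⟩
        exact e.injective (Prod.ext hz h2)
      · rintro ⟨hq, hz⟩
        have hq' : QuotientGroup.mk (x : G) = (QuotientGroup.mk (y : G) : G ⧸ Z) :=
          show ((e x).2 : G ⧸ Z) = ((e y).2 : G ⧸ Z) from Subtype.ext_iff.1 hq
        refine ⟨fun hxy => hz (by rw [hxy]), (K1 x y x.2 y.2).2 (QuotientGroup.eq.1 hq')⟩
    rw [SimpleGraph.adjMatrix_apply, Matrix.submatrix_apply]
    rw [Matrix.blockDiagonal_apply]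
    by_cases h1 : (e x).2 = (e y).2
    · by_cases h2 : (e x).1 = (e y).1
      · have : ¬ (commutingGraph G).Adj x y := fun h => (hiff.1 h).2 h2
        simp [h1, h2, this, hK]
      · have : (commutingGraph G).Adj x y := hiff.2 ⟨h1, h2⟩
        simp [h1, h2, this, hK]
    · have : ¬ (commutingGraph G).Adj x y := fun h => h1 (hiff.1 h).1
      simp [h1, this]
  have hcp : commCharpoly G = Kmat.charpoly ^ 3 := by
    rw [commCharpoly, hadj]
    have : (Matrix.blockDiagonal (fun _ : Q' => Kmat)).submatrix e e
        = Matrix.reindex e.symm e.symm (Matrix.blockDiagonal (fun _ : Q' => Kmat)) := by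
      simp [Matrix.reindex_apply]
    rw [this, Matrix.charpoly_reindex, charpoly_blockDiagonal]
    rw [Finset.prod_const, Finset.card_univ, hQ3]
  have hmZ : Fintype.card Z = m := by rw [hm, Nat.card_eq_fintype_card]
  have hKcp : Kmat.charpoly = (X + 1) ^ (m - 1) * (X - C ((m : ℝ) - 1)) := by
    rw [hK, charpoly_completeMatrix Z (by rw [hmZ]; omega), hmZ]
  constructor
  · rw [hcp, hKcp, mul_pow, ← pow_mul, Nat.mul_comm]
  · intro μ hroot
    rw [hcp, hKcp] at hroot
    simp only [IsRoot, eval_mul, eval_pow, eval_add, eval_sub, eval_X, eval_one,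
      eval_C] at hroot
    have hbase : (μ + 1) ^ (m - 1) * (μ - ((m : ℝ) - 1)) = 0 :=
      (pow_eq_zero_iff'.mp hroot).1
    rcases mul_eq_zero.1 hbase with h | h
    · have h0 : μ + 1 = 0 := (pow_eq_zero_iff'.mp h).1
      exact ⟨-1, by push_cast; linarith⟩
    · exact ⟨(m : ℤ) - 1, by push_cast; linarith⟩
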